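/- The gradient of the LSEAp function at a point x with all coordinates nonzero has k-th component sgn(xₖ)·exp(p(|xₖ| − ‖x‖_∞)) / Σᵢ exp(p(|xᵢ| − ‖x‖_∞)), and each component has absolute value at most 1; moreover the components' absolute values sum to 1. -/

import Mathlib

open Real Finset

lemma abs_real_sign {a : ℝ} (ha : a ≠ 0) : |Real.sign a| = 1 := by
  rcases lt_or_gt_of_ne ha with h | h
  · rw [Real.sign_of_neg h]; norm_num
  · rw [Real.sign_of_pos h]; norm_num

lemma real_sign_eq_signType {a : ℝ} (ha : a ≠ 0) :
    (SignType.sign a : ℝ) = Real.sign a := by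
  rcases lt_or_gt_of_ne ha with h | h
  · rw [Real.sign_of_neg h, sign_neg h]; norm_num
  · rw [Real.sign_of_pos h, sign_pos h]; norm_num

theorem lseap_gradient (N : ℕ) (p : ℝ) (hp : 0 < p) (x : Fin N → ℝ)
    (hx : ∀ i, x i ≠ 0) :
    (∀ k : Fin N,
        fderiv ℝ (fun y : Fin N → ℝ => (1 / p) * Real.log (∑ i, Real.exp (p * |y i|))) x
            (Pi.single k 1) =
          Real.sign (x k) * Real.exp (p * (|x k| - ‖x‖)) /
            ∑ i, Real.exp (p * (|x i| - ‖x‖))) ∧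
    (∀ k : Fin N,
        |Real.sign (x k) * Real.exp (p * (|x k| - ‖x‖)) /
            ∑ i, Real.exp (p * (|x i| - ‖x‖))| ≤ 1) ∧
    (0 < N →
      ∑ k, |Real.sign (x k) * Real.exp (p * (|x k| - ‖x‖)) /
          ∑ i, Real.exp (p * (|x i| - ‖x‖))| = 1) := by
  set c := ‖x‖ with hc
  -- simplification of the target quotient
  have hS' : ∀ k, Real.sign (x k) * Real.exp (p * (|x k| - c)) /
      ∑ i, Real.exp (p * (|x i| - c)) =
      Real.sign (x k) * Real.exp (p * |x k|) / ∑ i, Real.exp (p * |x i|) := by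
    intro k
    have hrw : ∀ a : ℝ, Real.exp (p * (a - c)) = Real.exp (p * a) / Real.exp (p * c) := by
      intro a; rw [mul_sub, Real.exp_sub]
    have hSpos : 0 < ∑ i, Real.exp (p * |x i|) :=
      Finset.sum_pos (fun i _ => Real.exp_pos _)
        (Finset.univ_nonempty_iff.mpr (Fin.pos_iff_nonempty.mp k.pos))
    simp only [hrw, ← Finset.sum_div]
    rw [div_eq_div_iff (div_pos hSpos (Real.exp_pos _)).ne' hSpos.ne']
    ring
  -- positivity of the denominator when N > 0
  have hderiv : ∀ k : Fin N,
      fderiv ℝ (fun y : Fin N → ℝ => (1 / p) * Real.log (∑ i, Real.exp (p * |y i|))) x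
        (Pi.single k 1) =
      Real.sign (x k) * Real.exp (p * |x k|) / ∑ i, Real.exp (p * |x i|) := by
    intro k
    have hN : 0 < N := k.pos
    have hSpos : 0 < ∑ i, Real.exp (p * |x i|) :=
      Finset.sum_pos (fun i _ => Real.exp_pos _) (by simp [Finset.univ_nonempty_iff, hN,
        Fin.pos_iff_nonempty.mp hN])
    have hterm : ∀ i : Fin N, HasFDerivAt (fun y : Fin N → ℝ => Real.exp (p * |y i|))
        ((p * Real.sign (x i) * Real.exp (p * |x i|)) • (ContinuousLinearMap.proj i : (Fin N → ℝ) →L[ℝ] ℝ)) x := by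
      intro i
      have h1 : HasFDerivAt (fun y : Fin N → ℝ => y i)
          (ContinuousLinearMap.proj i : (Fin N → ℝ) →L[ℝ] ℝ) x := by
        exact (ContinuousLinearMap.proj i : (Fin N → ℝ) →L[ℝ] ℝ).hasFDerivAt
      have h2 : HasFDerivAt (fun y : Fin N → ℝ => |y i|)
          ((Real.sign (x i)) • (ContinuousLinearMap.proj i : (Fin N → ℝ) →L[ℝ] ℝ)) x := by
        have := (hasDerivAt_abs (hx i)).comp_hasFDerivAt x h1
        rwa [real_sign_eq_signType (hx i)] at this
      have h3 : HasFDerivAt (fun y : Fin N → ℝ => p * |y i|)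
          ((p * Real.sign (x i)) • (ContinuousLinearMap.proj i : (Fin N → ℝ) →L[ℝ] ℝ)) x := by
        have := h2.const_mul p
        rwa [smul_smul] at this
      have h4 := (Real.hasDerivAt_exp (p * |x i|)).comp_hasFDerivAt x h3
      rwa [smul_smul, mul_comm (Real.exp _)] at h4
    have hsum : HasFDerivAt (fun y : Fin N → ℝ => ∑ i, Real.exp (p * |y i|))
        (∑ i, (p * Real.sign (x i) * Real.exp (p * |x i|)) • (ContinuousLinearMap.proj i : (Fin N → ℝ) →L[ℝ] ℝ)) x := by
      exact HasFDerivAt.fun_sum (fun i _ => hterm i)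
    have hlog := (Real.hasDerivAt_log hSpos.ne').comp_hasFDerivAt x hsum
    have hfin := hlog.const_mul (1 / p)
    have hQ : fderiv ℝ (fun y : Fin N → ℝ => 1 / p * Real.log (∑ i, Real.exp (p * |y i|))) x =
        (1 / p) • (∑ i, Real.exp (p * |x i|))⁻¹ •
          ∑ i, (p * Real.sign (x i) * Real.exp (p * |x i|)) •
            (ContinuousLinearMap.proj i : (Fin N → ℝ) →L[ℝ] ℝ) := hfin.fderiv
    rw [hQ]
    simp only [ContinuousLinearMap.smul_apply, ContinuousLinearMap.sum_apply,
      ContinuousLinearMap.proj_apply, smul_eq_mul]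
    have hsum1 : ∑ i, p * Real.sign (x i) * Real.exp (p * |x i|) * (Pi.single k 1 : Fin N → ℝ) i
        = p * Real.sign (x k) * Real.exp (p * |x k|) := by
      rw [Finset.sum_eq_single k]
      · simp
      · intro i _ hik; rw [Pi.single_eq_of_ne hik]; ring
      · intro h; exact absurd (Finset.mem_univ k) h
    rw [hsum1]
    field_simp
  refine ⟨fun k => by rw [hS' k]; exact hderiv k, fun k => ?_, fun hN => ?_⟩
  · have hN : 0 < N := k.pos
    have hSpos : 0 < ∑ i, Real.exp (p * (|x i| - c)) :=
      Finset.sum_pos (fun i _ => Real.exp_pos _)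
        (Finset.univ_nonempty_iff.mpr (Fin.pos_iff_nonempty.mp hN))
    rw [abs_div, abs_mul, abs_real_sign (hx k), one_mul, abs_of_pos (Real.exp_pos _),
      abs_of_pos hSpos, div_le_one hSpos]
    exact Finset.single_le_sum (f := fun i => Real.exp (p * (|x i| - c))) (fun i _ => (Real.exp_pos _).le) (Finset.mem_univ k)
  · have hSpos : 0 < ∑ i, Real.exp (p * (|x i| - c)) :=
      Finset.sum_pos (fun i _ => Real.exp_pos _)
        (Finset.univ_nonempty_iff.mpr (Fin.pos_iff_nonempty.mp hN))
    have : ∀ k : Fin N, |Real.sign (x k) * Real.exp (p * (|x k| - c)) /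
        ∑ i, Real.exp (p * (|x i| - c))| =
        Real.exp (p * (|x k| - c)) / ∑ i, Real.exp (p * (|x i| - c)) := by
      intro k
      rw [abs_div, abs_mul, abs_real_sign (hx k), one_mul, abs_of_pos (Real.exp_pos _),
        abs_of_pos hSpos]
    rw [Finset.sum_congr rfl (fun k _ => this k), ← Finset.sum_div, div_self hSpos.ne']
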